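/- Let n ∈ ℕ and let G be a simple graph on the vertex set Fin n. The evaluation of every formally reduced word in the edge matrix units U_G has all diagonal entries equal to 0 (the treeing condition) if and only if the graph G is acyclic. -/

import Mathlib

open Matrix

/-- A diagonal-normalizing partial isometry in `Mₙ(ℂ)`: a partial isometry `u`
such that `u d uᴴ` and `uᴴ d u` are diagonal for every diagonal matrix `d`. -/
def IsDNPI {n : ℕ} (u : Matrix (Fin n) (Fin n) ℂ) : Prop :=
  u * uᴴ * u = u ∧
    ∀ d : Matrix (Fin n) (Fin n) ℂ, d.IsDiag → (u * d * uᴴ).IsDiag ∧ (uᴴ * d * u).IsDiag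

/-- A set `U` of matrices is a graphing if the star-subalgebra of `Mₙ(ℂ)` generated by the
diagonal matrices together with `U` is all of `Mₙ(ℂ)`. -/
def IsGraphing {n : ℕ} (U : Set (Matrix (Fin n) (Fin n) ℂ)) : Prop :=
  StarAlgebra.adjoin ℂ ({d : Matrix (Fin n) (Fin n) ℂ | d.IsDiag} ∪ U) = ⊤

/-- The evaluation of a word: each letter is a matrix together with a Boolean indicating
whether the letter is the matrix itself (`true`) or its conjugate-transpose (`false`). -/
noncomputable def wordEval {n : ℕ} (w : List (Matrix (Fin n) (Fin n) ℂ × Bool)) :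
    Matrix (Fin n) (Fin n) ℂ :=
  (w.map fun p => if p.2 then p.1 else p.1ᴴ).prod

/-- A formally reduced word in `U`: a nonempty sequence of letters `(uᵢ, εᵢ)` with `uᵢ ∈ U`,
such that no letter is immediately followed by the same matrix with the opposite exponent. -/
def IsReducedWord {n : ℕ} (U : Set (Matrix (Fin n) (Fin n) ℂ))
    (w : List (Matrix (Fin n) (Fin n) ℂ × Bool)) : Prop :=
  w ≠ [] ∧ (∀ p ∈ w, p.1 ∈ U) ∧
    List.Chain' (fun a b => ¬(b.1 = a.1 ∧ b.2 ≠ a.2)) w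

/-- `U` is a treeing if the evaluation of every formally reduced word in `U` has all diagonal
entries equal to `0`. -/
def IsTreeing {n : ℕ} (U : Set (Matrix (Fin n) (Fin n) ℂ)) : Prop :=
  ∀ w, IsReducedWord U w → ∀ i, wordEval w i i = 0

/-- The edge matrix units of a simple graph `G` on `Fin n`: one standard matrix unit
`E_{ij}` for each edge `{i, j}` of `G` with `i < j`. -/
def edgeUnits {n : ℕ} (G : SimpleGraph (Fin n)) : Set (Matrix (Fin n) (Fin n) ℂ) :=
  {u | ∃ i j : Fin n, i < j ∧ G.Adj i j ∧ u = Matrix.single i j (1 : ℂ)}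

namespace EdgeUnitsAux

open SimpleGraph SimpleGraph.Walk

lemma stdBasis_inj {n : ℕ} {a b c d : Fin n}
    (h : single a b (1 : ℂ) = single c d 1) : a = c ∧ b = d := by
  have h2 := congrFun (congrFun h a) b
  simp only [Matrix.single, Matrix.of_apply, and_self, if_true, true_and, eq_self_iff_true,
    if_pos rfl] at h2
  split_ifs at h2 with hh
  · exact ⟨hh.1.symm, hh.2.symm⟩
  · simp at h2

lemma stdBasis_conjT {n : ℕ} (a b : Fin n) :
    (single a b (1 : ℂ))ᴴ = single b a 1 := by
  ext i j
  simp only [conjTranspose_apply, single, of_apply]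
  by_cases h1 : a = j <;> by_cases h2 : b = i <;> simp [h1, h2]

private lemma chain'_and {α : Type*} {P Q : α → α → Prop} {l : List α}
    (hP : l.Chain' P) (hQ : l.Chain' Q) : l.Chain' (fun a b => P a b ∧ Q a b) := by
  unfold List.Chain' at *
  rw [List.isChain_iff_getElem] at *
  exact fun i h => ⟨hP i h, hQ i h⟩

variable {n : ℕ} (G : SimpleGraph (Fin n))

noncomputable def dartLetter (d : G.Dart) : Matrix (Fin n) (Fin n) ℂ × Bool :=
  if d.fst < d.snd then (single d.fst d.snd 1, true)
  else (single d.snd d.fst 1, false)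

variable {G}

lemma wordEval_nil : wordEval ([] : List (Matrix (Fin n) (Fin n) ℂ × Bool)) = 1 := rfl

lemma wordEval_cons (p : Matrix (Fin n) (Fin n) ℂ × Bool)
    (w : List (Matrix (Fin n) (Fin n) ℂ × Bool)) :
    wordEval (p :: w) = (if p.2 then p.1 else p.1ᴴ) * wordEval w := by
  simp [wordEval]

lemma dartLetter_lt (d : G.Dart) (h : d.fst < d.snd) :
    dartLetter G d = (single d.fst d.snd 1, true) := by
  unfold dartLetter; rw [if_pos h]

lemma dartLetter_gt (d : G.Dart) (h : ¬ d.fst < d.snd) :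
    dartLetter G d = (single d.snd d.fst 1, false) := by
  unfold dartLetter; rw [if_neg h]

lemma dartLetter_eval (d : G.Dart) :
    (if (dartLetter G d).2 then (dartLetter G d).1 else (dartLetter G d).1ᴴ)
      = single d.fst d.snd 1 := by
  by_cases h : d.fst < d.snd
  · rw [dartLetter_lt d h]; simp
  · rw [dartLetter_gt d h]; simp [stdBasis_conjT]

lemma dartLetter_mem (d : G.Dart) : (dartLetter G d).1 ∈ edgeUnits G := by
  by_cases h : d.fst < d.snd
  · rw [dartLetter_lt d h]
    exact ⟨d.fst, d.snd, h, d.adj, rfl⟩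
  · rw [dartLetter_gt d h]
    exact ⟨d.snd, d.fst, lt_of_le_of_ne (not_lt.mp h) d.snd_ne_fst, d.adj.symm, rfl⟩

lemma wordEval_darts : ∀ {i j : Fin n} (W : G.Walk i j), 0 < W.length →
    wordEval (W.darts.map (dartLetter G)) = single i j 1 := by
  intro i j W
  induction W with
  | nil => intro hl; simp at hl
  | @cons u v j h p ih =>
    intro _
    rw [SimpleGraph.Walk.darts_cons, List.map_cons, wordEval_cons, dartLetter_eval]
    cases p with
    | nil => simp [wordEval]
    | @cons v' x j h' p' =>
      rw [ih (by simp)]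
      rw [show ((⟨(u, v), h⟩ : G.Dart).fst) = u from rfl,
        show ((⟨(u, v), h⟩ : G.Dart).snd) = v from rfl,
        Matrix.single_mul_single_same, one_mul]

lemma exists_walk_of_ne_zero :
    ∀ (w : List (Matrix (Fin n) (Fin n) ℂ × Bool)), (∀ p ∈ w, p.1 ∈ edgeUnits G) →
      ∀ i j : Fin n, wordEval w i j ≠ 0 →
        ∃ W : G.Walk i j, W.darts.map (dartLetter G) = w := by
  intro w
  induction w with
  | nil =>
    intro _ i j hne
    rw [wordEval_nil] at hne
    have hij : i = j := by
      by_contra hij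
      rw [Matrix.one_apply_ne hij] at hne
      exact hne rfl
    subst hij
    exact ⟨SimpleGraph.Walk.nil, rfl⟩
  | cons p w ih =>
    intro hU i j hne
    obtain ⟨p1, p2⟩ := p
    obtain ⟨a, b, hab, hadj, hp⟩ := hU (p1, p2) List.mem_cons_self
    simp only at hp
    subst hp
    rw [wordEval_cons] at hne
    cases p2 with
    | true =>
      rw [if_pos rfl] at hne
      have hia : i = a := by
        by_contra hia
        rw [Matrix.single_mul_apply_of_ne (c := 1) a b i j hia (wordEval w)] at hne
        exact hne rfl
      subst hia
      rw [Matrix.single_mul_apply_same, one_mul] at hne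
      obtain ⟨W', hW'⟩ := ih (fun q hq => hU q (List.mem_cons_of_mem _ hq)) b j hne
      refine ⟨SimpleGraph.Walk.cons hadj W', ?_⟩
      rw [SimpleGraph.Walk.darts_cons, List.map_cons, hW']
      congr 1
      exact dartLetter_lt (⟨(i, b), hadj⟩ : G.Dart) hab
    | false =>
      rw [if_neg Bool.false_ne_true, stdBasis_conjT] at hne
      have hib : i = b := by
        by_contra hib
        rw [Matrix.single_mul_apply_of_ne (c := 1) b a i j hib (wordEval w)] at hne
        exact hne rfl
      subst hib
      rw [Matrix.single_mul_apply_same, one_mul] at hne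
      obtain ⟨W', hW'⟩ := ih (fun q hq => hU q (List.mem_cons_of_mem _ hq)) a j hne
      refine ⟨SimpleGraph.Walk.cons hadj.symm W', ?_⟩
      rw [SimpleGraph.Walk.darts_cons, List.map_cons, hW']
      congr 1
      exact dartLetter_gt (⟨(i, a), hadj.symm⟩ : G.Dart) (asymm hab)

lemma chain'_of_isTrail : ∀ {i j : Fin n} (W : G.Walk i j), W.IsTrail →
    List.Chain' (fun a b => ¬(b.1 = a.1 ∧ b.2 ≠ a.2)) (W.darts.map (dartLetter G)) := by
  intro i j W
  induction W with
  | nil => intro _; simp [List.Chain']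
  | @cons u v j h p ih =>
    intro ht
    rw [SimpleGraph.Walk.isTrail_cons] at ht
    cases p with
    | nil => simp [List.Chain']
    | @cons v' x j h' p' =>
      rw [SimpleGraph.Walk.darts_cons, SimpleGraph.Walk.darts_cons, List.map_cons, List.map_cons,
        List.Chain']
      rw [List.isChain_cons_cons]
      constructor
      · rintro ⟨hm, hb⟩
        have hedge := ht.2
        rw [SimpleGraph.Walk.edges_cons, List.mem_cons] at hedge
        by_cases h1 : u < v <;> by_cases h2 : v < x
        · rw [dartLetter_lt (⟨(u, v), h⟩ : G.Dart) h1,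
            dartLetter_lt (⟨(v, x), h'⟩ : G.Dart) h2] at hb
          exact hb rfl
        · rw [dartLetter_lt (⟨(u, v), h⟩ : G.Dart) h1,
            dartLetter_gt (⟨(v, x), h'⟩ : G.Dart) h2] at hm
          obtain ⟨hxu, -⟩ := stdBasis_inj hm
          have hxu' : x = u := hxu
          exact hedge (Or.inl (by rw [hxu', Sym2.eq_swap]))
        · rw [dartLetter_gt (⟨(u, v), h⟩ : G.Dart) h1,
            dartLetter_lt (⟨(v, x), h'⟩ : G.Dart) h2] at hm
          obtain ⟨-, hxu⟩ := stdBasis_inj hm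
          have hxu' : x = u := hxu
          exact hedge (Or.inl (by rw [hxu', Sym2.eq_swap]))
        · rw [dartLetter_gt (⟨(u, v), h⟩ : G.Dart) h1,
            dartLetter_gt (⟨(v, x), h'⟩ : G.Dart) h2] at hb
          exact hb rfl
      · have := ih ht.1
        rwa [SimpleGraph.Walk.darts_cons, List.map_cons] at this

lemma isPath_of_chain' (hG : G.IsAcyclic) :
    ∀ {u v : Fin n} (W : G.Walk u v),
      List.Chain' (fun d d' : G.Dart => d.fst ≠ d'.snd) W.darts → W.IsPath := by
  intro u v W
  induction W with
  | nil => intro _; exact SimpleGraph.Walk.IsPath.nil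
  | @cons u v w h p ih =>
    intro hC
    rw [SimpleGraph.Walk.darts_cons] at hC
    have hp : p.IsPath := ih (List.isChain_cons.mp hC).2
    rw [SimpleGraph.Walk.cons_isPath_iff]
    refine ⟨hp, fun hu => ?_⟩
    cases p with
    | nil =>
      simp only [SimpleGraph.Walk.support_nil, List.mem_singleton] at hu
      exact h.ne hu
    | @cons v x w h' p' =>
      rw [SimpleGraph.Walk.support_cons, List.mem_cons] at hu
      rcases hu with rfl | hu
      · exact h.ne rfl
      · have hux : u ≠ x := by
          rw [SimpleGraph.Walk.darts_cons] at hC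
          exact (List.isChain_cons_cons.mp hC).1
        rw [SimpleGraph.Walk.cons_isPath_iff] at hp
        have hq : (SimpleGraph.Walk.cons h' (p'.takeUntil u hu)).IsPath := by
          rw [SimpleGraph.Walk.cons_isPath_iff]
          exact ⟨hp.1.takeUntil hu,
            fun hv => hp.2 (SimpleGraph.Walk.support_takeUntil_subset_support p' hu hv)⟩
        have hedge : s(u, v) ∉ (SimpleGraph.Walk.cons h' (p'.takeUntil u hu)).edges := by
          rw [SimpleGraph.Walk.edges_cons, List.mem_cons]
          rintro (he | he)
          · rw [Sym2.eq_iff] at he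
            rcases he with ⟨huv, -⟩ | ⟨hux', -⟩
            · exact h.ne huv
            · exact hux hux'
          · exact hp.2 (SimpleGraph.Walk.support_takeUntil_subset_support p' hu
              (SimpleGraph.Walk.snd_mem_support_of_mem_edges (p'.takeUntil u hu) he))
        exact hG _ ((SimpleGraph.Walk.cons_isCycle_iff _ h).mpr ⟨hq, hedge⟩)

end EdgeUnitsAux

open EdgeUnitsAux

/-- For a simple graph `G` on `Fin n`, the evaluation of every formally reduced word in the
edge matrix units `U_G` has all diagonal entries `0` (the treeing condition) if and only if
`G` is acyclic. -/
theorem edgeUnits_treeing_iff_acyclic {n : ℕ} (G : SimpleGraph (Fin n)) :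
    IsTreeing (edgeUnits G) ↔ G.IsAcyclic := by
  constructor
  · intro hT v W hW
    have hlen : 0 < W.length := by have := hW.three_le_length; omega
    have hred : IsReducedWord (edgeUnits G) (W.darts.map (dartLetter G)) := by
      refine ⟨?_, ?_, chain'_of_isTrail W hW.isCircuit.isTrail⟩
      · have hl : (W.darts.map (dartLetter G)).length = W.length := by
          rw [List.length_map, SimpleGraph.Walk.length_darts]
        intro hnil
        rw [hnil] at hl
        simp only [List.length_nil] at hl
        omega
      · intro p hp
        obtain ⟨d, -, rfl⟩ := List.mem_map.mp hp
        exact dartLetter_mem d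
    have h0 := hT _ hred v
    rw [wordEval_darts W hlen, Matrix.single_apply_same] at h0
    exact one_ne_zero h0
  · intro hG w hred i
    by_contra hne
    obtain ⟨W, hW⟩ := exists_walk_of_ne_zero w hred.2.1 i i hne
    have hDA := SimpleGraph.Walk.isChain_dartAdj_darts W
    have hword : List.Chain' (fun d d' : G.Dart =>
        ¬((dartLetter G d').1 = (dartLetter G d).1 ∧ (dartLetter G d').2 ≠ (dartLetter G d).2))
        W.darts := by
      have hc := hred.2.2
      rw [← hW] at hc
      unfold List.Chain' at hc
      rw [List.isChain_map] at hc
      exact hc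
    have hnbt : List.Chain' (fun d d' : G.Dart => d.fst ≠ d'.snd) W.darts := by
      refine List.IsChain.imp ?_ (chain'_and hDA hword)
      rintro ⟨⟨a, b⟩, hd⟩ ⟨⟨b', c⟩, hd'⟩ ⟨hda, hw⟩ hfs
      have hbb : b = b' := hda
      have hac : a = c := hfs
      subst hbb
      subst hac
      apply hw
      rcases lt_trichotomy a b with h1 | h1 | h1
      · rw [dartLetter_lt (⟨(a, b), hd⟩ : G.Dart) h1,
          dartLetter_gt (⟨(b, a), hd'⟩ : G.Dart) (lt_asymm h1)]
        exact ⟨rfl, by simp⟩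
      · exact absurd h1 hd.ne
      · rw [dartLetter_gt (⟨(a, b), hd⟩ : G.Dart) (lt_asymm h1),
          dartLetter_lt (⟨(b, a), hd'⟩ : G.Dart) h1]
        exact ⟨rfl, by simp⟩
    have hpath := isPath_of_chain' hG W hnbt
    cases W with
    | nil => exact hred.1 (by simpa using hW.symm)
    | cons h p =>
      rw [SimpleGraph.Walk.cons_isPath_iff] at hpath
      exact hpath.2 (SimpleGraph.Walk.end_mem_support p)
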